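/- Let ρ : M₂(ℂ) → M₄(ℂ) be the real Lie algebra homomorphism ρ(X) = [[Xᵃ, Xʰ], [Xʰ, Xᵃ]] with Xᵃ = (X − Xᴴ)/2 and Xʰ = (X + Xᴴ)/2, and let h be the Hermitian form h(u, v) = uᴴ D v on ℂ⁴ with D = diag(1, 1, −1, −1). Then the subspaces W₊ = span{e₁ + e₃, e₂ + e₄} and W₋ = span{e₁ − e₃, e₂ − e₄} of ℂ⁴ are invariant under ρ(X) for every X ∈ M₂(ℂ), the form h vanishes identically on W₊ and on W₋, and every complex subspace of ℂ⁴ invariant under all ρ(X) other than {0} and ℂ⁴ equals W₊ or W₋. In particular, ℂ⁴ has no nonzero proper ρ(M₂(ℂ))-invariant subspace on which h is nondegenerate. -/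

import Mathlib

open Matrix

/-- The map `X ↦ [[Xᵃ, Xʰ], [Xʰ, Xᵃ]]` where `Xᵃ = (X − Xᴴ)/2` is the anti-Hermitian part
and `Xʰ = (X + Xᴴ)/2` is the Hermitian part of `X`. -/
noncomputable def rho (X : Matrix (Fin 2) (Fin 2) ℂ) :
    Matrix (Fin 2 ⊕ Fin 2) (Fin 2 ⊕ Fin 2) ℂ :=
  Matrix.fromBlocks
    ((1 / 2 : ℂ) • (X - Xᴴ)) ((1 / 2 : ℂ) • (X + Xᴴ))
    ((1 / 2 : ℂ) • (X + Xᴴ)) ((1 / 2 : ℂ) • (X - Xᴴ))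

/-- The Gram matrix `D = diag(1, 1, −1, −1)` of the Hermitian form
`h(u, v) = uᴴ D v` of signature `(2,2)` on `ℂ⁴`. -/
noncomputable def Dmat : Matrix (Fin 2 ⊕ Fin 2) (Fin 2 ⊕ Fin 2) ℂ :=
  Matrix.fromBlocks 1 0 0 (-1)

/-- The standard basis vectors `e₁, e₂, e₃, e₄` of `ℂ⁴`. -/
noncomputable def e (i : Fin 2 ⊕ Fin 2) : (Fin 2 ⊕ Fin 2) → ℂ := Pi.single i 1

/-- `W₊ = span{e₁ + e₃, e₂ + e₄}`. -/
noncomputable def Wplus : Submodule ℂ ((Fin 2 ⊕ Fin 2) → ℂ) :=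
  Submodule.span ℂ {e (Sum.inl 0) + e (Sum.inr 0), e (Sum.inl 1) + e (Sum.inr 1)}

/-- `W₋ = span{e₁ − e₃, e₂ − e₄}`. -/
noncomputable def Wminus : Submodule ℂ ((Fin 2 ⊕ Fin 2) → ℂ) :=
  Submodule.span ℂ {e (Sum.inl 0) - e (Sum.inr 0), e (Sum.inl 1) - e (Sum.inr 1)}

namespace RhoAux

lemma mem_Wplus (v : (Fin 2 ⊕ Fin 2) → ℂ) :
    v ∈ Wplus ↔ ∀ j, v (Sum.inr j) = v (Sum.inl j) := by
  constructor
  · intro hv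
    induction hv using Submodule.span_induction with
    | mem x hx =>
      rcases hx with h | h <;> subst h <;> intro j <;> fin_cases j <;>
        simp [e, Pi.single_apply]
    | zero => intro j; simp
    | add x y hx hy ihx ihy => intro j; simp [ihx j, ihy j]
    | smul c x hx ih => intro j; simp [ih j]
  · intro h
    have hv : v = v (Sum.inl 0) • (e (Sum.inl 0) + e (Sum.inr 0))
        + v (Sum.inl 1) • (e (Sum.inl 1) + e (Sum.inr 1)) := by
      funext i
      rcases i with j | j <;> fin_cases j <;>
        simp [e, Pi.single_apply, h]
    rw [hv]
    exact Submodule.add_mem _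
      (Submodule.smul_mem _ _ (Submodule.subset_span (Set.mem_insert _ _)))
      (Submodule.smul_mem _ _ (Submodule.subset_span (Set.mem_insert_of_mem _ rfl)))

lemma mem_Wminus (v : (Fin 2 ⊕ Fin 2) → ℂ) :
    v ∈ Wminus ↔ ∀ j, v (Sum.inr j) = - v (Sum.inl j) := by
  constructor
  · intro hv
    induction hv using Submodule.span_induction with
    | mem x hx =>
      rcases hx with h | h <;> subst h <;> intro j <;> fin_cases j <;>
        simp [e, Pi.single_apply]
    | zero => intro j; simp
    | add x y hx hy ihx ihy => intro j; simp [ihx j, ihy j]; ring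
    | smul c x hx ih => intro j; simp [ih j]
  · intro h
    have hv : v = v (Sum.inl 0) • (e (Sum.inl 0) - e (Sum.inr 0))
        + v (Sum.inl 1) • (e (Sum.inl 1) - e (Sum.inr 1)) := by
      funext i
      rcases i with j | j <;> fin_cases j <;>
        simp [e, Pi.single_apply, h]
    rw [hv]
    exact Submodule.add_mem _
      (Submodule.smul_mem _ _ (Submodule.subset_span (Set.mem_insert _ _)))
      (Submodule.smul_mem _ _ (Submodule.subset_span (Set.mem_insert_of_mem _ rfl)))

def uu (v : (Fin 2 ⊕ Fin 2) → ℂ) : Fin 2 → ℂ := fun j => v (Sum.inl j) + v (Sum.inr j)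
def dd (v : (Fin 2 ⊕ Fin 2) → ℂ) : Fin 2 → ℂ := fun j => v (Sum.inl j) - v (Sum.inr j)

lemma rho_smul_I (X : Matrix (Fin 2) (Fin 2) ℂ) :
    rho (Complex.I • X) = Complex.I • Matrix.fromBlocks
      ((1/2 : ℂ) • (X + Xᴴ)) ((1/2 : ℂ) • (X - Xᴴ))
      ((1/2 : ℂ) • (X - Xᴴ)) ((1/2 : ℂ) • (X + Xᴴ)) := by
  ext i j
  rcases i with i | i <;> rcases j with j | j <;>
    simp [rho, fromBlocks, conjTranspose_apply, smul_eq_mul, Complex.star_def, _root_.map_mul,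
      Complex.conj_I] <;> ring

lemma plus_comb (X : Matrix (Fin 2) (Fin 2) ℂ) (v : (Fin 2 ⊕ Fin 2) → ℂ) :
    rho X *ᵥ v + (-Complex.I) • (rho (Complex.I • X) *ᵥ v)
      = Sum.elim (X *ᵥ uu v) (X *ᵥ uu v) := by
  rw [rho_smul_I, smul_mulVec, smul_smul]
  have h1 : (-Complex.I) * Complex.I = 1 := by
    simp [Complex.I_mul_I]
  rw [h1, one_smul]
  funext i
  rcases i with k | k <;> fin_cases k <;>
    simp [rho, fromBlocks, mulVec, dotProduct, Fintype.sum_sum_type, Fin.sum_univ_two, uu,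
      conjTranspose_apply, smul_eq_mul] <;> ring

lemma minus_comb (X : Matrix (Fin 2) (Fin 2) ℂ) (v : (Fin 2 ⊕ Fin 2) → ℂ) :
    rho X *ᵥ v - (-Complex.I) • (rho (Complex.I • X) *ᵥ v)
      = Sum.elim (-(Xᴴ *ᵥ dd v)) (Xᴴ *ᵥ dd v) := by
  rw [rho_smul_I, smul_mulVec, smul_smul]
  have h1 : (-Complex.I) * Complex.I = 1 := by
    simp [Complex.I_mul_I]
  rw [h1, one_smul]
  funext i
  rcases i with k | k <;> fin_cases k <;>
    simp [rho, fromBlocks, mulVec, dotProduct, Fintype.sum_sum_type, Fin.sum_univ_two, dd,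
      conjTranspose_apply, smul_eq_mul] <;> ring

lemma vecMulVec_mulVec (w c x : Fin 2 → ℂ) :
    Matrix.vecMulVec w c *ᵥ x = (c ⬝ᵥ x) • w := by
  funext m
  simp [Matrix.vecMulVec_apply, mulVec, dotProduct, Finset.mul_sum, mul_assoc, mul_comm,
    mul_left_comm, smul_eq_mul, mul_add]

lemma elim_self_mem {V : Submodule ℂ ((Fin 2 ⊕ Fin 2) → ℂ)}
    (hV : ∀ X : Matrix (Fin 2) (Fin 2) ℂ, ∀ v ∈ V, (rho X).mulVec v ∈ V)
    {v : (Fin 2 ⊕ Fin 2) → ℂ} (hv : v ∈ V) {j : Fin 2} (hj : uu v j ≠ 0)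
    (w : Fin 2 → ℂ) : Sum.elim w w ∈ V := by
  set X := Matrix.vecMulVec w (Pi.single j (uu v j)⁻¹) with hX
  have hXu : X *ᵥ uu v = w := by
    rw [hX, vecMulVec_mulVec, single_dotProduct, inv_mul_cancel₀ hj, one_smul]
  have hmem : rho X *ᵥ v + (-Complex.I) • (rho (Complex.I • X) *ᵥ v) ∈ V :=
    V.add_mem (hV X v hv) (V.smul_mem _ (hV (Complex.I • X) v hv))
  rwa [plus_comb, hXu] at hmem

lemma elim_neg_mem {V : Submodule ℂ ((Fin 2 ⊕ Fin 2) → ℂ)}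
    (hV : ∀ X : Matrix (Fin 2) (Fin 2) ℂ, ∀ v ∈ V, (rho X).mulVec v ∈ V)
    {v : (Fin 2 ⊕ Fin 2) → ℂ} (hv : v ∈ V) {j : Fin 2} (hj : dd v j ≠ 0)
    (w : Fin 2 → ℂ) : Sum.elim (-w) w ∈ V := by
  set X := (Matrix.vecMulVec w (Pi.single j (dd v j)⁻¹))ᴴ with hX
  have hXd : Xᴴ *ᵥ dd v = w := by
    rw [hX, conjTranspose_conjTranspose, vecMulVec_mulVec, single_dotProduct,
      inv_mul_cancel₀ hj, one_smul]
  have hmem : rho X *ᵥ v - (-Complex.I) • (rho (Complex.I • X) *ᵥ v) ∈ V :=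
    V.sub_mem (hV X v hv) (V.smul_mem _ (hV (Complex.I • X) v hv))
  rw [minus_comb, hXd] at hmem
  exact hmem

lemma eq_top_of {V : Submodule ℂ ((Fin 2 ⊕ Fin 2) → ℂ)}
    (hp : ∀ w : Fin 2 → ℂ, Sum.elim w w ∈ V)
    (hm : ∀ w : Fin 2 → ℂ, Sum.elim (-w) w ∈ V) : V = ⊤ := by
  rw [Submodule.eq_top_iff']
  intro y
  have h1 := hp (fun j => (y (Sum.inl j) + y (Sum.inr j)) / 2)
  have h2 := hm (fun j => (y (Sum.inr j) - y (Sum.inl j)) / 2)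
  have hmem := V.add_mem h1 h2
  have hy : y = Sum.elim (fun j => (y (Sum.inl j) + y (Sum.inr j)) / 2)
      (fun j => (y (Sum.inl j) + y (Sum.inr j)) / 2)
    + Sum.elim (-(fun j => (y (Sum.inr j) - y (Sum.inl j)) / 2))
      (fun j => (y (Sum.inr j) - y (Sum.inl j)) / 2) := by
    funext i
    rcases i with k | k <;> simp <;> ring
  rwa [← hy] at hmem

lemma classify {V : Submodule ℂ ((Fin 2 ⊕ Fin 2) → ℂ)}
    (hV : ∀ X : Matrix (Fin 2) (Fin 2) ℂ, ∀ v ∈ V, (rho X).mulVec v ∈ V)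
    (hbot : V ≠ ⊥) (htop : V ≠ ⊤) : V = Wplus ∨ V = Wminus := by
  rw [Submodule.ne_bot_iff] at hbot
  obtain ⟨v, hvV, hv0⟩ := hbot
  by_cases hu : ∃ j, uu v j ≠ 0
  · obtain ⟨j, hj⟩ := hu
    left
    have hp : ∀ w : Fin 2 → ℂ, Sum.elim w w ∈ V := elim_self_mem hV hvV hj
    apply le_antisymm
    · intro x hx
      rw [mem_Wplus]
      intro k
      by_contra hne
      have hdk : dd x k ≠ 0 := by
        simp only [dd, sub_ne_zero]
        intro h; exact hne h.symm
      exact htop (eq_top_of hp (elim_neg_mem hV hx hdk))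
    · intro x hx
      rw [mem_Wplus] at hx
      have hx' : x = Sum.elim (fun k => x (Sum.inl k)) (fun k => x (Sum.inl k)) := by
        funext i; rcases i with k | k <;> simp [hx k]
      rw [hx']
      exact hp _
  · push_neg at hu
    have hd : ∃ j, dd v j ≠ 0 := by
      by_contra hcon
      push_neg at hcon
      apply hv0
      funext i
      rcases i with k | k
      · have h1 := hu k; have h2 := hcon k
        simp only [uu] at h1; simp only [dd, sub_eq_zero] at h2
        have : v (Sum.inl k) + v (Sum.inl k) = 0 := by rw [h2] at h1 ⊢; exact h1
        simpa using by linear_combination this / 2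
      · have h1 := hu k; have h2 := hcon k
        simp only [uu] at h1; simp only [dd, sub_eq_zero] at h2
        simpa using by linear_combination (h1 - (sub_eq_zero.mpr h2)) / 2
    obtain ⟨j, hj⟩ := hd
    right
    have hm : ∀ w : Fin 2 → ℂ, Sum.elim (-w) w ∈ V := elim_neg_mem hV hvV hj
    apply le_antisymm
    · intro x hx
      rw [mem_Wminus]
      intro k
      by_contra hne
      have huk : uu x k ≠ 0 := by
        simp only [uu]
        intro h
        exact hne (by linear_combination h)
      exact htop (eq_top_of (elim_self_mem hV hx huk) hm)
    · intro x hx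
      rw [mem_Wminus] at hx
      have hx' : x = Sum.elim (-(fun k => x (Sum.inr k))) (fun k => x (Sum.inr k)) := by
        funext i; rcases i with k | k <;> simp [hx k]
      rw [hx']
      exact hm _

lemma vanish_plus : ∀ v ∈ Wplus, ∀ w ∈ Wplus,
    dotProduct (star v) (Dmat.mulVec w) = 0 := by
  intro v hv w hw
  rw [mem_Wplus] at hv hw
  simp [Dmat, fromBlocks, mulVec, dotProduct, Fintype.sum_sum_type, Fin.sum_univ_two,
    Matrix.one_apply, hv 0, hv 1, hw 0, hw 1]
  ring

lemma vanish_minus : ∀ v ∈ Wminus, ∀ w ∈ Wminus,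
    dotProduct (star v) (Dmat.mulVec w) = 0 := by
  intro v hv w hw
  rw [mem_Wminus] at hv hw
  simp [Dmat, fromBlocks, mulVec, dotProduct, Fintype.sum_sum_type, Fin.sum_univ_two,
    Matrix.one_apply, hv 0, hv 1, hw 0, hw 1]
  ring

end RhoAux

open RhoAux in
/-- The subspaces `W₊` and `W₋` of `ℂ⁴` are invariant under `ρ(X)` for all
`X ∈ M₂(ℂ)`; the Hermitian form `h(u,v) = uᴴ D v` (with `D = diag(1,1,−1,−1)`) vanishes
identically on `W₊` and on `W₋`; every `ρ(M₂(ℂ))`-invariant subspace other than `{0}` and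
`ℂ⁴` equals `W₊` or `W₋`; in particular `ℂ⁴` has no nonzero proper invariant subspace on
which `h` is nondegenerate. -/
theorem rho_invariant_subspaces :
    (∀ X : Matrix (Fin 2) (Fin 2) ℂ, ∀ v ∈ Wplus, (rho X).mulVec v ∈ Wplus) ∧
    (∀ X : Matrix (Fin 2) (Fin 2) ℂ, ∀ v ∈ Wminus, (rho X).mulVec v ∈ Wminus) ∧
    (∀ v ∈ Wplus, ∀ w ∈ Wplus, dotProduct (star v) (Dmat.mulVec w) = 0) ∧
    (∀ v ∈ Wminus, ∀ w ∈ Wminus, dotProduct (star v) (Dmat.mulVec w) = 0) ∧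
    (∀ V : Submodule ℂ ((Fin 2 ⊕ Fin 2) → ℂ),
      (∀ X : Matrix (Fin 2) (Fin 2) ℂ, ∀ v ∈ V, (rho X).mulVec v ∈ V) →
      V ≠ ⊥ → V ≠ ⊤ → V = Wplus ∨ V = Wminus) ∧
    (∀ V : Submodule ℂ ((Fin 2 ⊕ Fin 2) → ℂ),
      (∀ X : Matrix (Fin 2) (Fin 2) ℂ, ∀ v ∈ V, (rho X).mulVec v ∈ V) →
      V ≠ ⊥ → V ≠ ⊤ →
      ¬ (∀ v ∈ V, (∀ w ∈ V, dotProduct (star v) (Dmat.mulVec w) = 0) → v = 0)) := by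
  refine ⟨?_, ?_, vanish_plus, vanish_minus, fun V hV hb ht => classify hV hb ht, ?_⟩
  · intro X v hv
    rw [mem_Wplus] at hv
    rw [mem_Wplus]
    intro k
    simp [rho, fromBlocks, mulVec, dotProduct, Fintype.sum_sum_type, Fin.sum_univ_two,
      conjTranspose_apply, smul_eq_mul, hv 0, hv 1]
    ring
  · intro X v hv
    rw [mem_Wminus] at hv
    rw [mem_Wminus]
    intro k
    simp [rho, fromBlocks, mulVec, dotProduct, Fintype.sum_sum_type, Fin.sum_univ_two,
      conjTranspose_apply, smul_eq_mul, hv 0, hv 1]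
    ring
  · intro V hV hb ht hall
    have hne : e (Sum.inl 0) + e (Sum.inr 0) ≠ 0 := by
      intro h
      have := congrFun h (Sum.inl 0)
      simp [e, Pi.single_apply] at this
    rcases classify hV hb ht with h | h
    · subst h
      have hmem : e (Sum.inl 0) + e (Sum.inr 0) ∈ Wplus :=
        Submodule.subset_span (Set.mem_insert _ _)
      exact hne (hall _ hmem (fun w hw => vanish_plus _ hmem w hw))
    · subst h
      have hne' : e (Sum.inl 0) - e (Sum.inr 0) ≠ 0 := by
        intro h
        have := congrFun h (Sum.inl 0)
        simp [e, Pi.single_apply] at this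
      have hmem : e (Sum.inl 0) - e (Sum.inr 0) ∈ Wminus :=
        Submodule.subset_span (Set.mem_insert _ _)
      exact hne' (hall _ hmem (fun w hw => vanish_minus _ hmem w hw))
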